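/- Let n ≥ 1, Q ≥ 1, and let T : ℝⁿ → ℝⁿ be a bijective linear map such that the norm v ↦ |T(v)| (Euclidean norm of T(v)) is Q-quasi-conformal. Then Q^{−(n−1)}·‖T‖ⁿ ≤ |det T| ≤ Q^{n−1}·tⁿ, where ‖T‖ = max{|T(v)| : v ∈ S^{n−1}} is the operator norm of T and t = min{|T(v)| : v ∈ S^{n−1}}. -/

import Mathlib

open MeasureTheory Metric

section Aux
variable {n : ℕ} (f : EuclideanSpace ℝ (Fin n) →ₗ[ℝ] EuclideanSpace ℝ (Fin n))

noncomputable def qcS := LinearMap.adjoint f * f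

lemma qcS_symm : (qcS f).IsSymmetric := LinearMap.isSymmetric_adjoint_mul_self f

noncomputable def qcB : OrthonormalBasis (Fin n) ℝ (EuclideanSpace ℝ (Fin n)) :=
  (qcS_symm f).eigenvectorBasis finrank_euclideanSpace_fin

noncomputable def qcMu : Fin n → ℝ := (qcS_symm f).eigenvalues finrank_euclideanSpace_fin

lemma qcS_apply (i : Fin n) : qcS f (qcB f i) = qcMu f i • qcB f i := by
  exact_mod_cast (qcS_symm f).apply_eigenvectorBasis finrank_euclideanSpace_fin i

lemma qcS_inner (v : EuclideanSpace ℝ (Fin n)) :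
    inner ℝ (qcS f v) v = (‖f v‖ : ℝ) ^ 2 := by
  have : inner ℝ (qcS f v) v = (inner ℝ (f v) (f v) : ℝ) := by
    simp only [qcS, Module.End.mul_apply, LinearMap.adjoint_inner_left]
  rw [this, real_inner_self_eq_norm_sq]

lemma qcMu_eq (i : Fin n) : qcMu f i = ‖f (qcB f i)‖ ^ 2 := by
  have h := qcS_inner f (qcB f i)
  rw [qcS_apply, real_inner_smul_left, real_inner_self_eq_norm_sq,
    (qcB f).orthonormal.1 i] at h
  simpa using h

lemma qc_norm_sq (v : EuclideanSpace ℝ (Fin n)) :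
    ‖f v‖ ^ 2 = ∑ i, qcMu f i * (inner ℝ (qcB f i) v : ℝ) ^ 2 := by
  rw [← qcS_inner, ← (qcB f).sum_inner_mul_inner (qcS f v) v]
  congr 1; ext i
  have : (inner ℝ (qcS f v) (qcB f i) : ℝ) = inner ℝ v (qcS f (qcB f i)) := qcS_symm f v _
  rw [this, qcS_apply, real_inner_smul_right]
  ring_nf
  rw [real_inner_comm v (qcB f i)]
  ring

lemma qc_sum_coords (v : EuclideanSpace ℝ (Fin n)) (hv : ‖v‖ = 1) :
    ∑ i, (inner ℝ (qcB f i) v : ℝ) ^ 2 = 1 := by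
  have h := (qcB f).sum_inner_mul_inner v v
  rw [real_inner_self_eq_norm_sq, hv, one_pow] at h
  rw [← h]
  exact Finset.sum_congr rfl fun i _ => by rw [sq, real_inner_comm]

lemma qc_det : |LinearMap.det f| = ∏ i, ‖f (qcB f i)‖ := by
  have hd : LinearMap.det (qcS f) = LinearMap.det f ^ 2 := by
    rw [qcS, Module.End.mul_eq_comp, LinearMap.det_comp]
    have : LinearMap.det (LinearMap.adjoint f) = LinearMap.det f := by
      rw [← LinearMap.det_toMatrix (qcB f).toBasis,
        LinearMap.toMatrix_adjoint (qcB f) (qcB f) f, Matrix.det_conjTranspose,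
        star_trivial, LinearMap.det_toMatrix]
    rw [this]; ring
  have hdiag : LinearMap.toMatrix (qcB f).toBasis (qcB f).toBasis (qcS f)
      = Matrix.diagonal (qcMu f) := by
    ext i j
    rw [LinearMap.toMatrix_apply]
    have : qcS f ((qcB f).toBasis j) = qcMu f j • (qcB f).toBasis j := by
      simp [OrthonormalBasis.coe_toBasis, qcS_apply]
    rw [this, LinearEquiv.map_smul, Module.Basis.repr_self]
    by_cases h : i = j <;> simp [h, Matrix.diagonal_apply, Finsupp.single_apply, eq_comm]
  have hprod : LinearMap.det (qcS f) = ∏ i, qcMu f i := by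
    rw [← LinearMap.det_toMatrix (qcB f).toBasis, hdiag, Matrix.det_diagonal]
  have h2 : LinearMap.det f ^ 2 = (∏ i, ‖f (qcB f i)‖) ^ 2 := by
    rw [← hd, hprod, ← Finset.prod_pow]
    exact Finset.prod_congr rfl fun i _ => qcMu_eq f i
  calc |LinearMap.det f| = Real.sqrt (LinearMap.det f ^ 2) := (Real.sqrt_sq_eq_abs _).symm
    _ = Real.sqrt ((∏ i, ‖f (qcB f i)‖) ^ 2) := by rw [h2]
    _ = ∏ i, ‖f (qcB f i)‖ := Real.sqrt_sq (Finset.prod_nonneg fun i _ => norm_nonneg _)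

end Aux

/-- Let `Q ≥ 1` and `T : ℝⁿ → ℝⁿ` be bijective linear such that the norm `v ↦ |T v|` is
`Q`-quasi-conformal. Then `Q^{-(n-1)}·‖T‖ⁿ ≤ |det T| ≤ Q^{n-1}·tⁿ`, where
`‖T‖ = max{|T v| : v ∈ S^{n-1}}` and `t = min{|T v| : v ∈ S^{n-1}}`. -/
theorem det_bounds_of_quasiconformal (n : ℕ) (hn : 1 ≤ n) (Q : ℝ) (hQ : 1 ≤ Q)
    (T : EuclideanSpace ℝ (Fin n) ≃ₗ[ℝ] EuclideanSpace ℝ (Fin n))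
    (hT : ∀ v w : EuclideanSpace ℝ (Fin n), ‖v‖ = 1 → ‖w‖ = 1 → ‖T v‖ ≤ Q * ‖T w‖) :
    (Q ^ (n - 1))⁻¹ *
        (sSup {x : ℝ | ∃ v : EuclideanSpace ℝ (Fin n), ‖v‖ = 1 ∧ ‖T v‖ = x}) ^ n ≤
      |LinearMap.det T.toLinearMap| ∧
    |LinearMap.det T.toLinearMap| ≤
      Q ^ (n - 1) *
        (sInf {x : ℝ | ∃ v : EuclideanSpace ℝ (Fin n), ‖v‖ = 1 ∧ ‖T v‖ = x}) ^ n := by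
  obtain ⟨k, rfl⟩ : ∃ k, n = k + 1 := ⟨n - 1, (Nat.succ_pred_eq_of_pos hn).symm⟩
  have hQpos : (0 : ℝ) < Q := lt_of_lt_of_le one_pos hQ
  set f := T.toLinearMap with hf
  set K := {x : ℝ | ∃ v : EuclideanSpace ℝ (Fin (k + 1)), ‖v‖ = 1 ∧ ‖T v‖ = x} with hK
  set r : Fin (k + 1) → ℝ := fun i => ‖f (qcB f i)‖ with hr
  have hrnn : ∀ i, 0 ≤ r i := fun i => norm_nonneg _
  have hTf : ∀ v, ‖T v‖ = ‖f v‖ := fun v => rfl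
  have hunit : ∀ i, ‖qcB f i‖ = 1 := (qcB f).orthonormal.1
  have hrK : ∀ i, r i ∈ K := fun i => ⟨qcB f i, hunit i, (hTf _).symm ▸ rfl⟩
  have sqle : ∀ a b : ℝ, 0 ≤ a → 0 ≤ b → a ^ 2 ≤ b ^ 2 → a ≤ b := by
    intro a b ha hb h
    nlinarith
  -- spectral bounds
  have hub : ∀ (j : Fin (k + 1)), (∀ i, r i ≤ r j) → ∀ v : EuclideanSpace ℝ (Fin (k + 1)),
      ‖v‖ = 1 → ‖f v‖ ≤ r j := by
    intro j hj v hv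
    refine sqle _ _ (norm_nonneg _) (hrnn j) ?_
    rw [qc_norm_sq f v]
    calc ∑ i, qcMu f i * (inner ℝ (qcB f i) v : ℝ) ^ 2
        ≤ ∑ i, r j ^ 2 * (inner ℝ (qcB f i) v : ℝ) ^ 2 := by
          refine Finset.sum_le_sum fun i _ => ?_
          refine mul_le_mul_of_nonneg_right ?_ (sq_nonneg _)
          rw [qcMu_eq]
          exact pow_le_pow_left₀ (hrnn i) (hj i) 2
      _ = r j ^ 2 := by rw [← Finset.mul_sum, qc_sum_coords f v hv, mul_one]
  have hlb : ∀ (j : Fin (k + 1)), (∀ i, r j ≤ r i) → ∀ v : EuclideanSpace ℝ (Fin (k + 1)),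
      ‖v‖ = 1 → r j ≤ ‖f v‖ := by
    intro j hj v hv
    refine sqle _ _ (hrnn j) (norm_nonneg _) ?_
    rw [qc_norm_sq f v]
    calc (r j : ℝ) ^ 2 = ∑ i, r j ^ 2 * (inner ℝ (qcB f i) v : ℝ) ^ 2 := by
          rw [← Finset.mul_sum, qc_sum_coords f v hv, mul_one]
      _ ≤ ∑ i, qcMu f i * (inner ℝ (qcB f i) v : ℝ) ^ 2 := by
          refine Finset.sum_le_sum fun i _ => ?_
          refine mul_le_mul_of_nonneg_right ?_ (sq_nonneg _)
          rw [qcMu_eq]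
          exact pow_le_pow_left₀ (hrnn j) (hj i) 2
  obtain ⟨i₀, -, hi₀⟩ := Finset.exists_max_image Finset.univ r ⟨0, Finset.mem_univ 0⟩
  obtain ⟨i₁, -, hi₁⟩ := Finset.exists_min_image Finset.univ r ⟨0, Finset.mem_univ 0⟩
  have hi₀' : ∀ i, r i ≤ r i₀ := fun i => hi₀ i (Finset.mem_univ i)
  have hi₁' : ∀ i, r i₁ ≤ r i := fun i => hi₁ i (Finset.mem_univ i)
  have hKne : K.Nonempty := ⟨r i₀, hrK i₀⟩
  have hbddA : BddAbove K := ⟨r i₀, by rintro x ⟨v, hv, rfl⟩; rw [hTf]; exact hub i₀ hi₀' v hv⟩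
  have hbddB : BddBelow K := ⟨0, by rintro x ⟨v, hv, rfl⟩; exact norm_nonneg _⟩
  have hM : sSup K = r i₀ := le_antisymm
    (csSup_le hKne (by rintro x ⟨v, hv, rfl⟩; rw [hTf]; exact hub i₀ hi₀' v hv))
    (le_csSup hbddA (hrK i₀))
  have hm : sInf K = r i₁ := le_antisymm
    (csInf_le hbddB (hrK i₁))
    (le_csInf hKne (by rintro x ⟨v, hv, rfl⟩; rw [hTf]; exact hlb i₁ hi₁' v hv))
  have hTr : ∀ i j, r i ≤ Q * r j := fun i j => by
    have := hT (qcB f i) (qcB f j) (hunit i) (hunit j)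
    rwa [hTf, hTf] at this
  have hdet : |LinearMap.det f| = ∏ i, r i := qc_det f
  have hcard : ∀ j : Fin (k + 1), (Finset.univ.erase j).card = k := fun j => by
    rw [Finset.card_erase_of_mem (Finset.mem_univ j), Finset.card_univ, Fintype.card_fin]
    omega
  simp only [Nat.add_sub_cancel, hM, hm]
  constructor
  · -- lower bound
    have h1 : ∀ i ∈ Finset.univ.erase i₀, Q⁻¹ * r i₀ ≤ r i := fun i _ =>
      (inv_mul_le_iff₀ hQpos).mpr (hTr i₀ i)
    have h2 : (Q⁻¹ * r i₀) ^ k ≤ ∏ i ∈ Finset.univ.erase i₀, r i := by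
      calc (Q⁻¹ * r i₀) ^ k = ∏ _i ∈ Finset.univ.erase i₀, (Q⁻¹ * r i₀) := by
            rw [Finset.prod_const, hcard i₀]
        _ ≤ ∏ i ∈ Finset.univ.erase i₀, r i :=
            Finset.prod_le_prod (fun i _ => mul_nonneg (inv_nonneg.mpr hQpos.le) (hrnn i₀)) h1
    calc (Q ^ k)⁻¹ * r i₀ ^ (k + 1) = r i₀ * (Q⁻¹ * r i₀) ^ k := by
          rw [mul_pow, ← inv_pow, pow_succ]; ring
      _ ≤ r i₀ * ∏ i ∈ Finset.univ.erase i₀, r i :=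
          mul_le_mul_of_nonneg_left h2 (hrnn i₀)
      _ = ∏ i, r i := Finset.mul_prod_erase Finset.univ r (Finset.mem_univ i₀)
      _ = |LinearMap.det f| := hdet.symm
  · -- upper bound
    have h1 : ∀ i ∈ Finset.univ.erase i₁, r i ≤ Q * r i₁ := fun i _ => hTr i i₁
    have h2 : ∏ i ∈ Finset.univ.erase i₁, r i ≤ (Q * r i₁) ^ k := by
      calc ∏ i ∈ Finset.univ.erase i₁, r i ≤ ∏ _i ∈ Finset.univ.erase i₁, (Q * r i₁) :=
            Finset.prod_le_prod (fun i _ => hrnn i) h1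
        _ = (Q * r i₁) ^ k := by rw [Finset.prod_const, hcard i₁]
    calc |LinearMap.det f| = ∏ i, r i := hdet
      _ = r i₁ * ∏ i ∈ Finset.univ.erase i₁, r i :=
          (Finset.mul_prod_erase Finset.univ r (Finset.mem_univ i₁)).symm
      _ ≤ r i₁ * (Q * r i₁) ^ k := mul_le_mul_of_nonneg_left h2 (hrnn i₁)
      _ = Q ^ k * r i₁ ^ (k + 1) := by rw [mul_pow, pow_succ]; ring
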